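/- Let n ≥ 2 and let g_1,…,g_n be real constants. Define Q : ℝ^n × ℝ^{n−1} → ℝ by Q(x,z) = exp( Σ_{i=1}^{n−1} ( e^{z_i − x_i} + g_i e^{x_{i+1} − z_i} ) + g_n e^{−x_n − z_{n−1}} ). Then for all x ∈ ℝ^n, z ∈ ℝ^{n−1}: −(1/2) Σ_{i=1}^{n} ∂²Q/∂x_i² + [ Σ_{i=1}^{n−1} g_i e^{x_{i+1} − x_i} + g_n e^{−x_n − x_{n−1}} ] Q = −(1/2) Σ_{i=1}^{n−1} ∂²Q/∂z_i² + [ Σ_{i=1}^{n−2} g_i e^{z_{i+1} − z_i} + 2 g_{n−1} g_n e^{−2 z_{n−1}} ] Q. That is, Q intertwines the quadratic Hamiltonian −(1/2)Σ∂²_{x} + Σ_{i=1}^{n−1} g_i e^{x_{i+1}−x_i} + g_n e^{−x_n−x_{n−1}} of the D_n open Toda chain and the quadratic Hamiltonian of the C_{n−1} open Toda chain with couplings g_1,…,g_{n−2}, g_{n−1}g_n. -/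

import Mathlib

open Real

/-- Second partial derivative of `f` in the `i`-th coordinate at `x`. -/
noncomputable def pd2 {k : ℕ} (f : (Fin k → ℝ) → ℝ) (i : Fin k) (x : Fin k → ℝ) : ℝ :=
  deriv (deriv (fun t : ℝ => f (Function.update x i t))) (x i)

/-- The elementary kernel intertwining the `D_n` and `C_{n−1}` open Toda
chains (`n = m + 2 ≥ 2`):
`Q(x,z) = exp( Σ_{i=1}^{n−1} ( e^{z_i − x_i} + g_i e^{x_{i+1} − z_i} ) + g_n e^{−x_n − z_{n−1}} )`. -/
noncomputable def Qker (m : ℕ) (g : Fin (m + 2) → ℝ)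
    (x : Fin (m + 2) → ℝ) (z : Fin (m + 1) → ℝ) : ℝ :=
  Real.exp ((∑ i : Fin (m + 1), (Real.exp (z i - x i.castSucc)
        + g i.castSucc * Real.exp (x i.succ - z i)))
    + g (Fin.last (m + 1)) * Real.exp (-x (Fin.last (m + 1)) - z (Fin.last m)))

namespace DC

lemma inner_hasDerivAt (P Q R t : ℝ) :
    HasDerivAt (fun t : ℝ => P * Real.exp (-t) + Q * Real.exp t + R)
      (Q * Real.exp t - P * Real.exp (-t)) t := by
  have h1 : HasDerivAt (fun t : ℝ => Real.exp (-t)) (-Real.exp (-t)) t := by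
    simpa [Function.comp_def] using (Real.hasDerivAt_exp (-t)).comp t (hasDerivAt_neg t)
  have := ((h1.const_mul P).add ((Real.hasDerivAt_exp t).const_mul Q)).add_const R
  exact this.congr_deriv (by ring)

lemma exp_inner_hasDerivAt (P Q R t : ℝ) :
    HasDerivAt (fun t : ℝ => Real.exp (P * Real.exp (-t) + Q * Real.exp t + R))
      ((Q * Real.exp t - P * Real.exp (-t))
        * Real.exp (P * Real.exp (-t) + Q * Real.exp t + R)) t := by
  simpa [mul_comm, Function.comp_def] using (Real.hasDerivAt_exp _).comp t (inner_hasDerivAt P Q R t)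

lemma deriv2_exp_form (P Q R s : ℝ) :
    deriv (deriv (fun t : ℝ => Real.exp (P * Real.exp (-t) + Q * Real.exp t + R))) s
      = ((Q * Real.exp s - P * Real.exp (-s))^2 + (Q * Real.exp s + P * Real.exp (-s)))
          * Real.exp (P * Real.exp (-s) + Q * Real.exp s + R) := by
  have hderiv : deriv (fun t : ℝ => Real.exp (P * Real.exp (-t) + Q * Real.exp t + R))
      = fun t => (Q * Real.exp t - P * Real.exp (-t))
          * Real.exp (P * Real.exp (-t) + Q * Real.exp t + R) :=
    funext fun t => (exp_inner_hasDerivAt P Q R t).deriv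
  rw [hderiv]
  have h2 : HasDerivAt (fun t : ℝ => (Q * Real.exp t - P * Real.exp (-t))
      * Real.exp (P * Real.exp (-t) + Q * Real.exp t + R))
      (((Q * Real.exp s - P * Real.exp (-s))^2 + (Q * Real.exp s + P * Real.exp (-s)))
        * Real.exp (P * Real.exp (-s) + Q * Real.exp s + R)) s := by
    have hf : HasDerivAt (fun t : ℝ => Q * Real.exp t - P * Real.exp (-t))
        (Q * Real.exp s + P * Real.exp (-s)) s := by
      have h1 : HasDerivAt (fun t : ℝ => Real.exp (-t)) (-Real.exp (-s)) s := by
        simpa [Function.comp_def] using (Real.hasDerivAt_exp (-s)).comp s (hasDerivAt_neg s)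
      have := ((Real.hasDerivAt_exp s).const_mul Q).sub (h1.const_mul P)
      exact this.congr_deriv (by ring)
    have := hf.mul (exp_inner_hasDerivAt P Q R s)
    exact this.congr_deriv (by ring)
  exact h2.deriv

lemma pd2_of_form {k : ℕ} (f : (Fin k → ℝ) → ℝ) (i : Fin k) (x : Fin k → ℝ) (P Q R : ℝ)
    (h : ∀ t : ℝ, f (Function.update x i t)
        = Real.exp (P * Real.exp (-t) + Q * Real.exp t + R)) :
    pd2 f i x = ((Q * Real.exp (x i) - P * Real.exp (-(x i)))^2
        + (Q * Real.exp (x i) + P * Real.exp (-(x i)))) * f x := by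
  have hfx : f x = Real.exp (P * Real.exp (-(x i)) + Q * Real.exp (x i) + R) := by
    have := h (x i); rwa [Function.update_eq_self] at this
  rw [pd2, show (fun t : ℝ => f (Function.update x i t))
      = fun t : ℝ => Real.exp (P * Real.exp (-t) + Q * Real.exp t + R) from funext h,
    hfx]
  exact deriv2_exp_form P Q R (x i)

variable (m : ℕ) (g : Fin (m + 2) → ℝ) (x : Fin (m + 2) → ℝ) (z : Fin (m + 1) → ℝ)

noncomputable def aF (i : Fin (m + 1)) : ℝ := Real.exp (z i - x i.castSucc)
noncomputable def bF (i : Fin (m + 1)) : ℝ := g i.castSucc * Real.exp (x i.succ - z i)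
noncomputable def cF : ℝ :=
  g (Fin.last (m + 1)) * Real.exp (-x (Fin.last (m + 1)) - z (Fin.last m))

noncomputable def PxF (j : Fin (m + 2)) : ℝ :=
  (∑ i : Fin (m + 1), if i.castSucc = j then Real.exp (z i) else 0)
    + (if Fin.last (m + 1) = j then g (Fin.last (m + 1)) * Real.exp (-z (Fin.last m)) else 0)

noncomputable def QxF (j : Fin (m + 2)) : ℝ :=
  ∑ i : Fin (m + 1), if i.succ = j then g i.castSucc * Real.exp (-z i) else 0

noncomputable def RxF (j : Fin (m + 2)) : ℝ :=
  (∑ i : Fin (m + 1), ((if i.castSucc = j then 0 else Real.exp (z i - x i.castSucc))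
      + (if i.succ = j then 0 else g i.castSucc * Real.exp (x i.succ - z i))))
    + (if Fin.last (m + 1) = j then 0
        else g (Fin.last (m + 1)) * Real.exp (-x (Fin.last (m + 1)) - z (Fin.last m)))

lemma xform (j : Fin (m + 2)) (t : ℝ) :
    Qker m g (Function.update x j t) z
      = Real.exp (PxF m g z j * Real.exp (-t) + QxF m g z j * Real.exp t + RxF m g x z j) := by
  rw [Qker, PxF, QxF, RxF]
  congr 1
  have hterm : ∀ i : Fin (m + 1),
      Real.exp (z i - Function.update x j t i.castSucc)
        + g i.castSucc * Real.exp (Function.update x j t i.succ - z i)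
      = ((if i.castSucc = j then Real.exp (z i) else 0) * Real.exp (-t)
          + (if i.succ = j then g i.castSucc * Real.exp (-z i) else 0) * Real.exp t)
        + ((if i.castSucc = j then 0 else Real.exp (z i - x i.castSucc))
          + (if i.succ = j then 0 else g i.castSucc * Real.exp (x i.succ - z i))) := by
    intro i
    rcases eq_or_ne i.castSucc j with h1 | h1 <;> rcases eq_or_ne i.succ j with h2 | h2
    · exact absurd (h1.trans h2.symm) (Fin.castSucc_lt_succ (i := i)).ne
    · simp only [Function.update_apply, if_pos h1, if_neg h2, ← Real.exp_add]
      ring_nf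
    · simp only [Function.update_apply, if_neg h1, if_pos h2, ← Real.exp_add]
      ring_nf
      rw [Real.exp_add]
      ring
    · simp only [Function.update_apply, if_neg h1, if_neg h2]
      ring
  have hlast : g (Fin.last (m + 1))
        * Real.exp (-Function.update x j t (Fin.last (m + 1)) - z (Fin.last m))
      = (if Fin.last (m + 1) = j then g (Fin.last (m + 1)) * Real.exp (-z (Fin.last m)) else 0)
          * Real.exp (-t)
        + (if Fin.last (m + 1) = j then 0
            else g (Fin.last (m + 1)) * Real.exp (-x (Fin.last (m + 1)) - z (Fin.last m))) := by
    rcases eq_or_ne (Fin.last (m + 1)) j with h1 | h1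
    · simp only [Function.update_apply, if_pos h1]
      rw [show -t - z (Fin.last m) = -z (Fin.last m) + -t by ring, Real.exp_add]
      ring
    · simp [Function.update_apply, h1]
  rw [Finset.sum_congr rfl fun i _ => hterm i, hlast]
  simp only [Finset.sum_add_distrib, ← Finset.sum_mul]
  ring

lemma pd2_x (j : Fin (m + 2)) :
    pd2 (fun u => Qker m g u z) j x
      = ((QxF m g z j * Real.exp (x j) - PxF m g z j * Real.exp (-(x j)))^2
          + (QxF m g z j * Real.exp (x j) + PxF m g z j * Real.exp (-(x j))))
        * Qker m g x z :=
  pd2_of_form _ _ _ _ _ _ (fun t => xform m g x z j t)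

noncomputable def PzF (j : Fin (m + 1)) : ℝ :=
  g j.castSucc * Real.exp (x j.succ)
    + (if Fin.last m = j then g (Fin.last (m + 1)) * Real.exp (-x (Fin.last (m + 1))) else 0)

noncomputable def QzF (j : Fin (m + 1)) : ℝ := Real.exp (-x j.castSucc)

noncomputable def RzF (j : Fin (m + 1)) : ℝ :=
  (∑ i : Fin (m + 1), if i = j then 0
      else (Real.exp (z i - x i.castSucc) + g i.castSucc * Real.exp (x i.succ - z i)))
    + (if Fin.last m = j then 0
        else g (Fin.last (m + 1)) * Real.exp (-x (Fin.last (m + 1)) - z (Fin.last m)))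

lemma zform (j : Fin (m + 1)) (t : ℝ) :
    Qker m g x (Function.update z j t)
      = Real.exp (PzF m g x j * Real.exp (-t) + QzF m x j * Real.exp t + RzF m g x z j) := by
  rw [Qker, PzF, QzF, RzF]
  congr 1
  have hterm : ∀ i : Fin (m + 1),
      Real.exp (Function.update z j t i - x i.castSucc)
        + g i.castSucc * Real.exp (x i.succ - Function.update z j t i)
      = ((if i = j then g i.castSucc * Real.exp (x i.succ) else 0) * Real.exp (-t)
          + (if i = j then Real.exp (-x i.castSucc) else 0) * Real.exp t)
        + (if i = j then 0
            else (Real.exp (z i - x i.castSucc) + g i.castSucc * Real.exp (x i.succ - z i))) := by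
    intro i
    rcases eq_or_ne i j with h1 | h1
    · simp only [Function.update_apply, if_pos h1, ← Real.exp_add]
      ring_nf
      rw [Real.exp_add]
      ring
    · simp only [Function.update_apply, if_neg h1]
      ring
  have hlast : g (Fin.last (m + 1))
        * Real.exp (-x (Fin.last (m + 1)) - Function.update z j t (Fin.last m))
      = (if Fin.last m = j then g (Fin.last (m + 1)) * Real.exp (-x (Fin.last (m + 1))) else 0)
          * Real.exp (-t)
        + (if Fin.last m = j then 0
            else g (Fin.last (m + 1)) * Real.exp (-x (Fin.last (m + 1)) - z (Fin.last m))) := by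
    rcases eq_or_ne (Fin.last m) j with h1 | h1
    · simp only [Function.update_apply, if_pos h1]
      rw [show -x (Fin.last (m + 1)) - t = -x (Fin.last (m + 1)) + -t by ring, Real.exp_add]
      ring
    · simp [Function.update_apply, h1]
  rw [Finset.sum_congr rfl fun i _ => hterm i, hlast]
  simp only [Finset.sum_add_distrib, ← Finset.sum_mul, Finset.sum_ite_eq', Finset.mem_univ,
    if_pos]
  ring

lemma pd2_z (j : Fin (m + 1)) :
    pd2 (fun v => Qker m g x v) j z
      = ((QzF m x j * Real.exp (z j) - PzF m g x j * Real.exp (-(z j)))^2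
          + (QzF m x j * Real.exp (z j) + PzF m g x j * Real.exp (-(z j))))
        * Qker m g x z :=
  pd2_of_form _ _ _ _ _ _ (fun t => zform m g x z j t)

lemma px0 : PxF m g z 0 = Real.exp (z 0) := by
  rw [PxF, if_neg (by simp [Fin.ext_iff])]
  rw [Finset.sum_congr rfl fun (i : Fin (m+1)) _ =>
    (by simp only [Fin.castSucc_eq_zero_iff] :
      (if i.castSucc = (0 : Fin (m + 2)) then Real.exp (z i) else 0)
        = if i = 0 then Real.exp (z i) else 0)]
  simp [Finset.sum_ite_eq']

lemma qx0 : QxF m g z 0 = 0 := by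
  rw [QxF]
  simp [Fin.succ_ne_zero]

lemma pxm (j0 : Fin m) : PxF m g z j0.succ.castSucc = Real.exp (z j0.succ) := by
  rw [PxF, if_neg (Fin.castSucc_lt_last j0.succ).ne']
  rw [Finset.sum_congr rfl fun (i : Fin (m+1)) _ =>
    (by simp only [Fin.castSucc_inj] :
      (if i.castSucc = j0.succ.castSucc then Real.exp (z i) else 0)
        = if i = j0.succ then Real.exp (z i) else 0)]
  simp [Finset.sum_ite_eq']

lemma qxm (j0 : Fin m) :
    QxF m g z j0.succ.castSucc = g j0.castSucc.castSucc * Real.exp (-z j0.castSucc) := by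
  rw [QxF]
  rw [Finset.sum_congr rfl fun (i : Fin (m+1)) _ =>
    (by rw [← Fin.succ_castSucc]; simp only [Fin.succ_inj] :
      (if i.succ = j0.succ.castSucc then g i.castSucc * Real.exp (-z i) else 0)
        = if i = j0.castSucc then g i.castSucc * Real.exp (-z i) else 0)]
  simp [Finset.sum_ite_eq']

lemma pxl : PxF m g z (Fin.last (m + 1))
    = g (Fin.last (m + 1)) * Real.exp (-z (Fin.last m)) := by
  rw [PxF]
  simp [fun i : Fin (m + 1) => (Fin.castSucc_lt_last i).ne]

lemma qxl : QxF m g z (Fin.last (m + 1))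
    = g (Fin.last m).castSucc * Real.exp (-z (Fin.last m)) := by
  rw [QxF]
  rw [Finset.sum_congr rfl fun (i : Fin (m+1)) _ =>
    (by rw [← Fin.succ_last]; simp only [Fin.succ_inj] :
      (if i.succ = Fin.last (m + 1) then g i.castSucc * Real.exp (-z i) else 0)
        = if i = Fin.last m then g i.castSucc * Real.exp (-z i) else 0)]
  simp [Finset.sum_ite_eq']

lemma sum_split (F : Fin (m + 2) → ℝ) :
    ∑ j, F j = F 0 + (∑ i : Fin m, F (i.succ.castSucc)) + F (Fin.last (m + 1)) := by
  rw [Fin.sum_univ_succ, Fin.sum_univ_castSucc]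
  simp only [Fin.succ_castSucc, Fin.succ_last]
  ring

lemma hx0 : pd2 (fun u => Qker m g u z) 0 x
    = ((0 - aF m x z 0)^2 + (0 + aF m x z 0)) * Qker m g x z := by
  rw [pd2_x, px0, qx0]
  simp only [aF, Fin.castSucc_zero, Real.exp_sub, Real.exp_add, Real.exp_neg]
  ring

lemma hxm (j0 : Fin m) : pd2 (fun u => Qker m g u z) j0.succ.castSucc x
    = ((bF m g x z j0.castSucc - aF m x z j0.succ)^2
        + (bF m g x z j0.castSucc + aF m x z j0.succ)) * Qker m g x z := by
  rw [pd2_x, pxm, qxm]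
  simp only [aF, bF, Fin.succ_castSucc, Real.exp_sub, Real.exp_add, Real.exp_neg]
  ring

lemma hxl : pd2 (fun u => Qker m g u z) (Fin.last (m + 1)) x
    = ((bF m g x z (Fin.last m) - cF m g x z)^2
        + (bF m g x z (Fin.last m) + cF m g x z)) * Qker m g x z := by
  rw [pd2_x, pxl, qxl]
  simp only [bF, cF, Fin.succ_last, Real.exp_sub, Real.exp_add, Real.exp_neg]
  ring

lemma hzm (j0 : Fin m) : pd2 (fun v => Qker m g x v) j0.castSucc z
    = ((aF m x z j0.castSucc - bF m g x z j0.castSucc)^2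
        + (aF m x z j0.castSucc + bF m g x z j0.castSucc)) * Qker m g x z := by
  rw [pd2_z, PzF, QzF, if_neg (Fin.castSucc_lt_last j0).ne']
  simp only [aF, bF, Real.exp_sub, Real.exp_add, Real.exp_neg]
  ring

lemma hzl : pd2 (fun v => Qker m g x v) (Fin.last m) z
    = ((aF m x z (Fin.last m) - (bF m g x z (Fin.last m) + cF m g x z))^2
        + (aF m x z (Fin.last m) + (bF m g x z (Fin.last m) + cF m g x z)))
      * Qker m g x z := by
  rw [pd2_z, PzF, QzF, if_pos rfl]
  simp only [aF, bF, cF, Fin.succ_last, Real.exp_sub, Real.exp_add, Real.exp_neg]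
  ring

lemma hab (i : Fin (m + 1)) :
    g i.castSucc * Real.exp (x i.succ - x i.castSucc) = aF m x z i * bF m g x z i := by
  simp only [aF, bF, Real.exp_sub, Real.exp_add, Real.exp_neg]
  field_simp

lemma hac : g (Fin.last (m + 1)) * Real.exp (-x (Fin.last (m + 1)) - x (Fin.last m).castSucc)
    = aF m x z (Fin.last m) * cF m g x z := by
  simp only [aF, cF, Real.exp_sub, Real.exp_add, Real.exp_neg]
  field_simp

lemma hzb (i : Fin m) :
    g i.castSucc.castSucc * Real.exp (z i.succ - z i.castSucc)
      = aF m x z i.succ * bF m g x z i.castSucc := by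
  simp only [aF, bF, Fin.succ_castSucc, Real.exp_sub, Real.exp_add, Real.exp_neg]
  field_simp

lemma hbc : 2 * (g (Fin.last m).castSucc * g (Fin.last (m + 1)))
      * Real.exp (-(2 * z (Fin.last m)))
    = 2 * (bF m g x z (Fin.last m) * cF m g x z) := by
  rw [show -(2 * z (Fin.last m)) = -z (Fin.last m) + -z (Fin.last m) by ring]
  simp only [bF, cF, Fin.succ_last, Real.exp_sub, Real.exp_add, Real.exp_neg]
  field_simp

end DC

/-- The kernel `Q` intertwines the quadratic Hamiltonian of the `D_n` open Toda
chain and the quadratic Hamiltonian of the `C_{n−1}` open Toda chain with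
couplings `g_1, …, g_{n−2}, g_{n−1} g_n`, where `n = m + 2 ≥ 2`. -/
theorem D_C_intertwining (m : ℕ) (g : Fin (m + 2) → ℝ)
    (x : Fin (m + 2) → ℝ) (z : Fin (m + 1) → ℝ) :
    -(1/2) * (∑ i : Fin (m + 2), pd2 (fun u => Qker m g u z) i x)
      + ((∑ i : Fin (m + 1), g i.castSucc * Real.exp (x i.succ - x i.castSucc))
          + g (Fin.last (m + 1))
              * Real.exp (-x (Fin.last (m + 1)) - x (Fin.last m).castSucc)) * Qker m g x z
    = -(1/2) * (∑ i : Fin (m + 1), pd2 (fun v => Qker m g x v) i z)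
      + ((∑ i : Fin m, g i.castSucc.castSucc * Real.exp (z i.succ - z i.castSucc))
          + 2 * (g (Fin.last m).castSucc * g (Fin.last (m + 1)))
              * Real.exp (-(2 * z (Fin.last m)))) * Qker m g x z := by
  rw [DC.sum_split m (fun j => pd2 (fun u => Qker m g u z) j x),
    Fin.sum_univ_castSucc (f := fun i : Fin (m + 1) => pd2 (fun v => Qker m g x v) i z)]
  rw [DC.hx0 m g x z, DC.hxl m g x z, DC.hzl m g x z,
    Finset.sum_congr rfl (fun i0 _ => DC.hxm m g x z i0),
    Finset.sum_congr rfl (fun i0 _ => DC.hzm m g x z i0),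
    Finset.sum_congr rfl (fun i _ => DC.hab m g x z i),
    Finset.sum_congr rfl (fun i _ => DC.hzb m g x z i),
    DC.hac m g x z, DC.hbc m g x z,
    ← Finset.sum_mul, ← Finset.sum_mul]
  set A := DC.aF m x z with hA
  set B := DC.bF m g x z with hB
  set C := DC.cF m g x z with hC
  set Q := Qker m g x z with hQ
  have kx : (∑ i0 : Fin m, ((B i0.castSucc - A i0.succ)^2 + (B i0.castSucc + A i0.succ)))
      = (∑ i : Fin m, B i.castSucc * B i.castSucc) + (∑ i : Fin m, A i.succ * A i.succ)
        - 2 * (∑ i : Fin m, A i.succ * B i.castSucc)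
        + ((∑ i : Fin m, B i.castSucc) + (∑ i : Fin m, A i.succ)) := by
    rw [Finset.sum_congr rfl (fun (i : Fin m) _ => (by ring :
      ((B i.castSucc - A i.succ)^2 + (B i.castSucc + A i.succ))
        = B i.castSucc * B i.castSucc + A i.succ * A i.succ - 2 * (A i.succ * B i.castSucc)
          + (B i.castSucc + A i.succ)))]
    simp only [Finset.sum_add_distrib, Finset.sum_sub_distrib, ← Finset.mul_sum]
  have kz : (∑ i0 : Fin m, ((A i0.castSucc - B i0.castSucc)^2 + (A i0.castSucc + B i0.castSucc)))
      = (∑ i : Fin m, A i.castSucc * A i.castSucc) + (∑ i : Fin m, B i.castSucc * B i.castSucc)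
        - 2 * (∑ i : Fin m, A i.castSucc * B i.castSucc)
        + ((∑ i : Fin m, A i.castSucc) + (∑ i : Fin m, B i.castSucc)) := by
    rw [Finset.sum_congr rfl (fun (i : Fin m) _ => (by ring :
      ((A i.castSucc - B i.castSucc)^2 + (A i.castSucc + B i.castSucc))
        = A i.castSucc * A i.castSucc + B i.castSucc * B i.castSucc
          - 2 * (A i.castSucc * B i.castSucc) + (A i.castSucc + B i.castSucc)))]
    simp only [Finset.sum_add_distrib, Finset.sum_sub_distrib, ← Finset.mul_sum]
  have k3 : (∑ i : Fin (m + 1), A i * B i)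
      = (∑ i : Fin m, A i.castSucc * B i.castSucc) + A (Fin.last m) * B (Fin.last m) :=
    Fin.sum_univ_castSucc _
  have u1 : (∑ i : Fin (m + 1), A i * A i) = A 0 * A 0 + ∑ i : Fin m, A i.succ * A i.succ :=
    Fin.sum_univ_succ _
  have u2 : (∑ i : Fin (m + 1), A i * A i)
      = (∑ i : Fin m, A i.castSucc * A i.castSucc) + A (Fin.last m) * A (Fin.last m) :=
    Fin.sum_univ_castSucc _
  have v1 : (∑ i : Fin (m + 1), A i) = A 0 + ∑ i : Fin m, A i.succ := Fin.sum_univ_succ _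
  have v2 : (∑ i : Fin (m + 1), A i)
      = (∑ i : Fin m, A i.castSucc) + A (Fin.last m) := Fin.sum_univ_castSucc _
  have w1 : (∑ i : Fin m, A i.succ * A i.succ)
      = (∑ i : Fin m, A i.castSucc * A i.castSucc)
        + A (Fin.last m) * A (Fin.last m) - A 0 * A 0 := by linarith
  have w2 : (∑ i : Fin m, A i.succ)
      = (∑ i : Fin m, A i.castSucc) + A (Fin.last m) - A 0 := by linarith
  rw [kx, kz, k3, w1, w2]
  ring
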